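/- arXiv:1502.05633 — 3 statements merged into one kernel-verified Lean document; each statement's English description precedes it below -/
import Mathlib

section
/- Let ψ_{i+1}, …, ψ_j be independent random variables with ψ_t ~ Beta(m+2mr, (2t-3)m + 2mr(t-1)) for a fixed integer m ≥ 2 and real r ≥ 0, and let S_i^{(j)} = ∏_{t=i+1}^{j} (1 - ψ_t). Then, with χ = (1+2r)/(2+2r), E[S_i^{(j)}] ≤ (i/j)^χ for all 1 ≤ i < j. -/
open MeasureTheory ProbabilityTheory
open scoped NNReal ENNReal

/-- The Beta(a,b) probability measure on ℝ: normalized density x^(a-1)(1-x)^(b-1) on (0,1). -/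
noncomputable def betaMeasure' (a b : ℝ) : Measure ℝ :=
  (volume.restrict (Set.Ioo (0:ℝ) 1)).withDensity
    (fun x => ENNReal.ofReal
      (x ^ (a-1) * (1-x) ^ (b-1) / ∫ y in Set.Ioo (0:ℝ) 1, y ^ (a-1) * (1-y) ^ (b-1)))

noncomputable def betaB (a b : ℝ) : ℝ := ∫ y in Set.Ioo (0:ℝ) 1, y ^ (a-1) * (1-y) ^ (b-1)

lemma betaIntegral_eq_betaB {a b : ℝ} (ha : 0 < a) (hb : 0 < b) :
    Complex.betaIntegral (a : ℂ) (b : ℂ) = ((betaB a b : ℝ) : ℂ) := by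
  rw [Complex.betaIntegral, intervalIntegral.integral_of_le zero_le_one,
    MeasureTheory.integral_Ioc_eq_integral_Ioo, betaB]
  rw [show ((∫ y in Set.Ioo (0:ℝ) 1, y ^ (a-1) * (1-y) ^ (b-1) : ℝ) : ℂ)
      = ∫ y in Set.Ioo (0:ℝ) 1, ((y ^ (a-1) * (1-y) ^ (b-1) : ℝ) : ℂ) from (integral_ofReal).symm]
  refine setIntegral_congr_fun measurableSet_Ioo (fun x hx => ?_)
  obtain ⟨hx0, hx1⟩ := hx
  rw [Complex.ofReal_mul, Complex.ofReal_cpow hx0.le, Complex.ofReal_cpow (by linarith : (0:ℝ) ≤ 1-x)]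
  push_cast
  ring

lemma betaB_eq_Gamma {a b : ℝ} (ha : 0 < a) (hb : 0 < b) :
    betaB a b = Real.Gamma a * Real.Gamma b / Real.Gamma (a+b) := by
  have h := Complex.Gamma_mul_Gamma_eq_betaIntegral
    (s := (a:ℂ)) (t := (b:ℂ)) (by simpa using ha) (by simpa using hb)
  rw [betaIntegral_eq_betaB ha hb] at h
  have h2 : ((Real.Gamma a * Real.Gamma b : ℝ) : ℂ)
      = ((Real.Gamma (a+b) * betaB a b : ℝ) : ℂ) := by
    push_cast [← Complex.Gamma_ofReal]
    simpa using h
  have h3 := Complex.ofReal_inj.mp h2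
  have hG : Real.Gamma (a+b) ≠ 0 := (Real.Gamma_pos_of_pos (by linarith)).ne'
  field_simp
  linarith [h3]

lemma betaB_pos {a b : ℝ} (ha : 0 < a) (hb : 0 < b) : 0 < betaB a b := by
  rw [betaB_eq_Gamma ha hb]
  have := Real.Gamma_pos_of_pos ha
  have := Real.Gamma_pos_of_pos hb
  have := Real.Gamma_pos_of_pos (show 0 < a + b by linarith)
  positivity

lemma betaMeasure_integral_one_sub {a b : ℝ} (ha : 0 < a) (hb : 0 < b) :
    ∫ x, (1 - x) ∂(betaMeasure' a b) = b / (a + b) := by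
  have hB : 0 < betaB a b := betaB_pos ha hb
  have hd : Measurable (fun x : ℝ =>
      Real.toNNReal (x ^ (a-1) * (1-x) ^ (b-1) / betaB a b)) := by
    apply Measurable.real_toNNReal
    exact ((measurable_id.pow_const _).mul ((measurable_const.sub measurable_id).pow_const _)).div_const _
  have key : betaMeasure' a b = (volume.restrict (Set.Ioo (0:ℝ) 1)).withDensity
      (fun x => ((Real.toNNReal (x ^ (a-1) * (1-x) ^ (b-1) / betaB a b) : ℝ≥0) : ℝ≥0∞)) := rfl
  rw [key, integral_withDensity_eq_integral_smul hd]
  have : ∫ x in Set.Ioo (0:ℝ) 1,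
      (Real.toNNReal (x ^ (a-1) * (1-x) ^ (b-1) / betaB a b)) • (1 - x)
      = ∫ x in Set.Ioo (0:ℝ) 1, (x ^ (a-1) * (1-x) ^ ((b+1)-1)) / betaB a b := by
    refine setIntegral_congr_fun measurableSet_Ioo (fun x hx => ?_)
    obtain ⟨hx0, hx1⟩ := hx
    have h1x : (0:ℝ) < 1 - x := by linarith
    have hnn : 0 ≤ x ^ (a-1) * (1-x) ^ (b-1) / betaB a b := by positivity
    rw [NNReal.smul_def, Real.coe_toNNReal _ hnn]
    rw [show (b+1)-1 = (b-1)+1 by ring, Real.rpow_add_one h1x.ne']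
    simp only [smul_eq_mul, div_eq_mul_inv]
    ring
  rw [this, integral_div]
  have hBb : (∫ x in Set.Ioo (0:ℝ) 1, x ^ (a-1) * (1-x) ^ ((b+1)-1)) = betaB a (b+1) := rfl
  rw [hBb, betaB_eq_Gamma ha hb, betaB_eq_Gamma ha (by linarith)]
  rw [show a + (b+1) = (a+b)+1 by ring, Real.Gamma_add_one hb.ne',
    Real.Gamma_add_one (show a+b ≠ 0 by positivity)]
  have g1 := (Real.Gamma_pos_of_pos ha).ne'
  have g2 := (Real.Gamma_pos_of_pos hb).ne'
  have g3 := (Real.Gamma_pos_of_pos (show 0 < a+b by linarith)).ne'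
  field_simp

lemma integral_finset_prod_indep {Ω : Type*} [MeasurableSpace Ω] (P : Measure Ω)
    [IsProbabilityMeasure P] (g : ℕ → Ω → ℝ) (hgm : ∀ t, Measurable (g t))
    (hind : iIndepFun g P) (s : Finset ℕ) :
    ∫ ω, ∏ t ∈ s, g t ω ∂P = ∏ t ∈ s, ∫ ω, g t ω ∂P := by
  classical
  induction s using Finset.induction with
  | empty => simp
  | @insert a s ha ih =>
    simp only [Finset.prod_insert ha]
    have h1 : IndepFun (g a) (∏ t ∈ s, g t) P :=
      (hind.indepFun_finset_prod_of_notMem hgm ha).symm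
    have hpm : Measurable (∏ t ∈ s, g t) := by
      rw [Finset.prod_fn]; exact Finset.measurable_prod s (fun t _ => hgm t)
    have h2 : ∫ ω, (g a * ∏ t ∈ s, g t) ω ∂P
        = (∫ ω, g a ω ∂P) * ∫ ω, (∏ t ∈ s, g t) ω ∂P :=
      h1.integral_mul_eq_mul_integral (hgm a).aestronglyMeasurable hpm.aestronglyMeasurable
    simp only [Pi.mul_apply, Finset.prod_apply] at h2
    rw [h2, ih]

lemma telescope_prod {i : ℕ} (hi : 1 ≤ i) : ∀ j, i < j →
    ∏ t ∈ Finset.Icc (i+1) j, (((t:ℝ)-1)/t) = (i:ℝ)/j := by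
  intro j hj
  induction j, hj using Nat.le_induction with
  | base =>
    rw [Finset.Icc_self, Finset.prod_singleton]
    push_cast
    ring_nf
  | succ n hn ih =>
    rw [Finset.prod_Icc_succ_top (by omega : i+1 ≤ n+1), ih]
    have hn0 : (0:ℝ) < n := by
      have : 1 ≤ n := by omega
      exact_mod_cast Nat.lt_of_lt_of_le Nat.zero_lt_one this
    push_cast
    rw [add_sub_cancel_right]
    field_simp

lemma factor_bound (r : ℝ) (hr : 0 ≤ r) {T : ℝ} (hT : 2 ≤ T) :
    ((2*T-3) + 2*r*(T-1)) / ((2*T-2) + 2*r*T) ≤ ((T-1)/T) ^ ((1+2*r)/(2+2*r)) := by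
  set s := 2+2*r with hs
  have hs2 : 2 ≤ s := by simp [hs]; linarith
  have hT0 : (0:ℝ) < T := by linarith
  have hsT : 4 ≤ s*T := by nlinarith
  have hχ : (1+2*r)/(2+2*r) = 1 - 1/s := by
    rw [hs]; field_simp; ring
  have hnum : (2*T-3) + 2*r*(T-1) = s*T - s - 1 := by rw [hs]; ring
  have hden : (2*T-2) + 2*r*T = s*T - 2 := by rw [hs]; ring
  set x := (T-1)/T with hxdef
  have hx0 : 0 < x := div_pos (by linarith) hT0
  have hx : x = 1 + (-1/T) := by rw [hxdef]; field_simp; ring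
  have hp0 : 0 ≤ 1/s := by positivity
  have hp1 : 1/s ≤ 1 := by rw [div_le_one (by linarith)]; linarith
  have hb : x ^ (1/s) ≤ 1 + (1/s)*(-1/T) := by
    rw [hx]
    exact rpow_one_add_le_one_add_mul_self (by rw [neg_div]; nlinarith [one_div_le_one_div_of_le two_pos hT]) hp0 hp1
  have hpos : 0 < 1 + (1/s)*(-1/T) := by
    have h1 : (1/s)*(1/T) ≤ (1/2)*(1/2) := by
      apply mul_le_mul
      · rw [div_le_div_iff₀ (by linarith) two_pos]; linarith
      · rw [div_le_div_iff₀ hT0 two_pos]; linarith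
      · positivity
      · norm_num
    have : (1/s)*(-1/T) = -((1/s)*(1/T)) := by ring
    rw [this]; linarith
  have hxpow : x ^ ((1:ℝ) - 1/s) = x / x ^ (1/s) := by
    rw [eq_div_iff (Real.rpow_pos_of_pos hx0 _).ne', ← Real.rpow_add hx0]
    norm_num
  rw [hχ, hnum, hden, hxpow]
  have h1 : (s*T - s - 1)/(s*T-2) ≤ (s*T-s)/(s*T-1) := by
    rw [div_le_div_iff₀ (by linarith) (by linarith)]
    nlinarith
  have hs0 : s ≠ 0 := by linarith
  have hsT1 : s*T - 1 ≠ 0 := by linarith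
  have h2 : (s*T-s)/(s*T-1) = x / (1 + (1/s)*(-1/T)) := by
    rw [eq_div_iff hpos.ne', hxdef]
    field_simp
    ring
  have h3 : x / (1 + (1/s)*(-1/T)) ≤ x / x ^ (1/s) :=
    div_le_div_of_nonneg_left hx0.le (Real.rpow_pos_of_pos hx0 _) hb
  exact h1.trans (h2.trans_le h3)

/-- If ψ_{i+1},…,ψ_j are independent with ψ_t ~ Beta(m+2mr, (2t-3)m+2mr(t-1)) (m ≥ 2 integer,
r ≥ 0 real), and S_i^{(j)} = ∏_{t=i+1}^j (1-ψ_t), then with χ = (1+2r)/(2+2r),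
E[S_i^{(j)}] ≤ (i/j)^χ for 1 ≤ i < j. -/
theorem stmt_3 {Ω : Type*} [MeasurableSpace Ω] (P : Measure Ω) [IsProbabilityMeasure P]
    (m : ℕ) (hm : 2 ≤ m) (r : ℝ) (hr : 0 ≤ r) (i j : ℕ) (hi : 1 ≤ i) (hij : i < j)
    (ψ : ℕ → Ω → ℝ) (hmeas : ∀ t, Measurable (ψ t))
    (hind : iIndepFun ψ P)
    (hlaw : ∀ t ∈ Finset.Icc (i+1) j,
      Measure.map (ψ t) P = betaMeasure' ((m:ℝ) + 2*m*r) ((2*(t:ℝ)-3)*m + 2*m*r*((t:ℝ)-1))) :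
    ∫ ω, ∏ t ∈ Finset.Icc (i+1) j, (1 - ψ t ω) ∂P ≤ ((i:ℝ)/j) ^ ((1+2*r)/(2+2*r)) := by
  have hm0 : (0:ℝ) < m := by exact_mod_cast Nat.lt_of_lt_of_le Nat.zero_lt_two hm
  set g : ℕ → Ω → ℝ := fun t ω => 1 - ψ t ω with hgdef
  have hgm : ∀ t, Measurable (g t) := fun t => measurable_const.sub (hmeas t)
  have hgind : iIndepFun g P :=
    hind.comp (fun _ x => 1 - x) (fun _ => measurable_const.sub measurable_id)
  have hprod : ∫ ω, ∏ t ∈ Finset.Icc (i+1) j, (1 - ψ t ω) ∂P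
      = ∏ t ∈ Finset.Icc (i+1) j, ∫ ω, g t ω ∂P :=
    integral_finset_prod_indep P g hgm hgind _
  rw [hprod]
  have hval : ∀ t ∈ Finset.Icc (i+1) j, (∫ ω, g t ω ∂P)
      = ((2*(t:ℝ)-3)*m + 2*m*r*((t:ℝ)-1)) /
        (((m:ℝ) + 2*m*r) + ((2*(t:ℝ)-3)*m + 2*m*r*((t:ℝ)-1))) := by
    intro t ht
    have h2t : (2:ℝ) ≤ (t:ℝ) := by
      have := (Finset.mem_Icc.mp ht).1
      exact_mod_cast Nat.le_trans (by omega) this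
    have ha : 0 < (m:ℝ) + 2*m*r := by positivity
    have hb : 0 < (2*(t:ℝ)-3)*m + 2*m*r*((t:ℝ)-1) := by
      have h1 : 0 < (2*(t:ℝ)-3) * m := mul_pos (by linarith) hm0
      have h2 : 0 ≤ 2*(m:ℝ)*r*((t:ℝ)-1) := by
        apply mul_nonneg (by positivity) (by linarith)
      linarith
    have hmap : (∫ ω, g t ω ∂P) = ∫ x, (1-x) ∂(Measure.map (ψ t) P) :=
      (integral_map (hmeas t).aemeasurable
        ((measurable_const.sub measurable_id).aestronglyMeasurable)).symm
    rw [hmap, hlaw t ht, betaMeasure_integral_one_sub ha hb]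
  have hbound : ∀ t ∈ Finset.Icc (i+1) j,
      (∫ ω, g t ω ∂P) ≤ (((t:ℝ)-1)/t) ^ ((1+2*r)/(2+2*r)) := by
    intro t ht
    have h2t : (2:ℝ) ≤ (t:ℝ) := by
      have := (Finset.mem_Icc.mp ht).1
      exact_mod_cast Nat.le_trans (by omega) this
    rw [hval t ht]
    have ha : 0 < (m:ℝ) + 2*m*r := by positivity
    have hb : 0 < (2*(t:ℝ)-3)*m + 2*m*r*((t:ℝ)-1) := by
      have h1 : 0 < (2*(t:ℝ)-3) * m := mul_pos (by linarith) hm0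
      have h2 : 0 ≤ 2*(m:ℝ)*r*((t:ℝ)-1) := by
        apply mul_nonneg (by positivity) (by linarith)
      linarith
    have hc : 0 < (2*(t:ℝ)-2) + 2*r*(t:ℝ) := by
      have h2 : 0 ≤ 2*r*(t:ℝ) := by positivity
      linarith
    have heq : ((2*(t:ℝ)-3)*m + 2*m*r*((t:ℝ)-1)) /
        (((m:ℝ) + 2*m*r) + ((2*(t:ℝ)-3)*m + 2*m*r*((t:ℝ)-1)))
        = ((2*(t:ℝ)-3) + 2*r*((t:ℝ)-1)) / ((2*(t:ℝ)-2) + 2*r*(t:ℝ)) := by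
      rw [div_eq_div_iff (by linarith : (0:ℝ) < (m:ℝ) + 2*m*r + ((2*(t:ℝ)-3)*m + 2*m*r*((t:ℝ)-1))).ne' hc.ne']
      ring
    rw [heq]
    exact factor_bound r hr h2t
  have hnn : ∀ t ∈ Finset.Icc (i+1) j, 0 ≤ ∫ ω, g t ω ∂P := by
    intro t ht
    have h2t : (2:ℝ) ≤ (t:ℝ) := by
      have := (Finset.mem_Icc.mp ht).1
      exact_mod_cast Nat.le_trans (by omega) this
    rw [hval t ht]
    have hb : 0 < (2*(t:ℝ)-3)*m + 2*m*r*((t:ℝ)-1) := by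
      have h1 : 0 < (2*(t:ℝ)-3) * m := mul_pos (by linarith) hm0
      have h2 : 0 ≤ 2*(m:ℝ)*r*((t:ℝ)-1) := by
        apply mul_nonneg (by positivity) (by linarith)
      linarith
    have ha : 0 < (m:ℝ) + 2*m*r := by positivity
    exact div_nonneg hb.le (by linarith)
  calc ∏ t ∈ Finset.Icc (i+1) j, ∫ ω, g t ω ∂P
      ≤ ∏ t ∈ Finset.Icc (i+1) j, (((t:ℝ)-1)/t) ^ ((1+2*r)/(2+2*r)) :=
        Finset.prod_le_prod hnn hbound
    _ = (∏ t ∈ Finset.Icc (i+1) j, (((t:ℝ)-1)/t)) ^ ((1+2*r)/(2+2*r)) := by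
        apply Real.finset_prod_rpow
        intro t ht
        have h2t : (2:ℝ) ≤ (t:ℝ) := by
          have := (Finset.mem_Icc.mp ht).1
          exact_mod_cast Nat.le_trans (by omega) this
        have ht0 : (0:ℝ) < t := by linarith
        apply div_nonneg (by linarith) ht0.le
    _ = ((i:ℝ)/j) ^ ((1+2*r)/(2+2*r)) := by
        rw [telescope_prod hi j hij]
end

section
/- For each fixed a > 0 and integer j ≥ 0 there exists C > 0 such that for all integers k ≥ 2, ∫_0^1 |log y|^j (1-y)^k y^{a-1} dy ≤ C (log k)^j k^{-a}. -/
open MeasureTheory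

private lemma aux_two_le {x : ℝ} (hx : 0 < x) : 2 ≤ x + x⁻¹ := by
  have h := mul_inv_cancel₀ hx.ne'
  nlinarith [sq_nonneg (x - 1), inv_pos.mpr hx]

private lemma aux_abs_log {u : ℝ} (hu : 0 < u) : |Real.log u| ≤ u + u⁻¹ := by
  have hui : 0 < u⁻¹ := inv_pos.mpr hu
  rw [abs_le]
  constructor
  · have h := Real.log_le_sub_one_of_pos hui
    rw [Real.log_inv] at h
    linarith
  · have h := Real.log_le_sub_one_of_pos hu
    linarith

private lemma aux_pow_add {x y : ℝ} (hx : 0 ≤ x) (hy : 0 ≤ y) (j : ℕ) :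
    (x + y) ^ j ≤ 2 ^ j * (x ^ j + y ^ j) := by
  calc (x + y) ^ j ≤ (2 * max x y) ^ j := by
        apply pow_le_pow_left₀ (by positivity)
        rcases le_total x y with h | h
        · rw [max_eq_right h]; linarith
        · rw [max_eq_left h]; linarith
    _ = 2 ^ j * (max x y) ^ j := mul_pow _ _ _
    _ ≤ 2 ^ j * (x ^ j + y ^ j) := by
        apply mul_le_mul_of_nonneg_left _ (by positivity)
        rcases le_total x y with h | h
        · rw [max_eq_right h]; nlinarith [pow_nonneg hx j]
        · rw [max_eq_left h]; nlinarith [pow_nonneg hy j]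

set_option maxHeartbeats 800000 in
/-- For fixed a > 0 and j ≥ 0 there is C > 0 such that for all integers k ≥ 2,
∫_0^1 |log y|^j (1-y)^k y^{a-1} dy ≤ C (log k)^j k^{-a}. -/
theorem stmt_10 (a : ℝ) (ha : 0 < a) (j : ℕ) :
    ∃ C > 0, ∀ k : ℕ, 2 ≤ k →
      (∫ y in Set.Ioo (0:ℝ) 1, |Real.log y| ^ j * (1-y) ^ k * y ^ (a-1)) ≤
        C * Real.log k ^ j * (k:ℝ) ^ (-a) := by
  have hlog2 : 0 < Real.log 2 := Real.log_pos one_lt_two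
  set ε : ℝ := a / (2 * (j + 1)) with hεdef
  have hε : 0 < ε := by positivity
  have hkey : ε * (2 * ((j:ℝ) + 1)) = a := by
    rw [hεdef]; field_simp
  clear_value ε
  set μ : ℝ := ε * j with hμdef
  have hμ0 : 0 ≤ μ := by positivity
  clear_value μ
  have hμa : μ < a := by nlinarith [Nat.cast_nonneg (α := ℝ) j]
  have hp : 0 < a + μ := by linarith
  have hq : 0 < a - μ := by linarith
  have hεl : 0 < ε * Real.log 2 := mul_pos hε hlog2
  set c : ℝ := 1 + 1 / (ε * Real.log 2) with hcdef
  have hc : 0 < c := by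
    have := one_div_pos.mpr hεl
    rw [hcdef]; linarith
  clear_value c
  have hGp := Real.Gamma_pos_of_pos hp
  have hGq := Real.Gamma_pos_of_pos hq
  refine ⟨2 ^ j * c ^ j * (Real.Gamma (a + μ) + Real.Gamma (a - μ)), by positivity, ?_⟩
  intro k hk
  have hk0 : (0:ℝ) < (k:ℝ) := by exact_mod_cast Nat.lt_of_lt_of_le Nat.zero_lt_two hk
  have hk2 : (2:ℝ) ≤ (k:ℝ) := by exact_mod_cast hk
  have hlogk2 : Real.log 2 ≤ Real.log k := Real.log_le_log (by norm_num) hk2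
  have hlogk : 0 < Real.log k := lt_of_lt_of_le hlog2 hlogk2
  set g : ℝ → ℝ := fun y => Real.log k ^ j * (2 ^ j * c ^ j) *
      ((k:ℝ) ^ μ * (y ^ (a + μ - 1) * Real.exp (-((k:ℝ) * y))) +
       (k:ℝ) ^ (-μ) * (y ^ (a - μ - 1) * Real.exp (-((k:ℝ) * y)))) with hgdef
  have hint1 : IntegrableOn (fun y : ℝ => y ^ (a + μ - 1) * Real.exp (-((k:ℝ) * y)))
      (Set.Ioi 0) := by
    have := integrableOn_rpow_mul_exp_neg_mul_rpow (s := a + μ - 1) (p := 1) (b := (k:ℝ))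
      (by linarith) (by norm_num) hk0
    simpa [Real.rpow_one, neg_mul] using this
  have hint2 : IntegrableOn (fun y : ℝ => y ^ (a - μ - 1) * Real.exp (-((k:ℝ) * y)))
      (Set.Ioi 0) := by
    have := integrableOn_rpow_mul_exp_neg_mul_rpow (s := a - μ - 1) (p := 1) (b := (k:ℝ))
      (by linarith) (by norm_num) hk0
    simpa [Real.rpow_one, neg_mul] using this
  have hgint : IntegrableOn g (Set.Ioi 0) :=
    (((hint1.const_mul _).add (hint2.const_mul _)).const_mul _)
  -- pointwise bound on Ioo 0 1
  have hpt : ∀ y ∈ Set.Ioo (0:ℝ) 1,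
      |Real.log y| ^ j * (1-y) ^ k * y ^ (a-1) ≤ g y := by
    rintro y ⟨hy0, hy1⟩
    set s : ℝ := (k:ℝ) * y with hsdef
    have hs : 0 < s := mul_pos hk0 hy0
    clear_value s
    have hexp : (1 - y) ^ k ≤ Real.exp (-s) := by
      have h1 : (1 - y : ℝ) ≤ Real.exp (-y) := by linarith [Real.add_one_le_exp (-y)]
      calc (1 - y) ^ k ≤ Real.exp (-y) ^ k := pow_le_pow_left₀ (by linarith) h1 k
        _ = Real.exp ((k:ℕ) * (-y)) := (Real.exp_nat_mul _ _).symm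
        _ = Real.exp (-s) := by rw [hsdef]; ring_nf
    have hlogy : |Real.log y| ≤ Real.log k * (1 + |Real.log s| / Real.log 2) := by
      have hls : Real.log s = Real.log k + Real.log y := by
        rw [hsdef]; exact Real.log_mul (ne_of_gt hk0) (ne_of_gt hy0)
      have h2 : |Real.log y - Real.log s| = Real.log k := by
        rw [hls, show Real.log y - (Real.log k + Real.log y) = -Real.log k by ring,
          abs_neg, abs_of_pos hlogk]
      have h1 : |Real.log y| ≤ |Real.log s| + Real.log k := by
        calc |Real.log y| = |Real.log s + (Real.log y - Real.log s)| := by ring_nf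
          _ ≤ |Real.log s| + |Real.log y - Real.log s| := abs_add_le _ _
          _ = |Real.log s| + Real.log k := by rw [h2]
      have hdiv : (1:ℝ) ≤ Real.log k / Real.log 2 := (one_le_div hlog2).mpr hlogk2
      have h3 : |Real.log s| ≤ Real.log k / Real.log 2 * |Real.log s| := by
        nlinarith [abs_nonneg (Real.log s)]
      calc |Real.log y| ≤ |Real.log s| + Real.log k := h1
        _ ≤ Real.log k / Real.log 2 * |Real.log s| + Real.log k := by linarith
        _ = Real.log k * (1 + |Real.log s| / Real.log 2) := by field_simp; ring
    have hCs : 1 + |Real.log s| / Real.log 2 ≤ c * (s ^ ε + s ^ (-ε)) := by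
      have hx : 0 < s ^ ε := Real.rpow_pos_of_pos hs ε
      have hxinv : s ^ (-ε) = (s ^ ε)⁻¹ := Real.rpow_neg hs.le ε
      have hlogx : Real.log (s ^ ε) = ε * Real.log s := Real.log_rpow hs ε
      set x : ℝ := s ^ ε with hxeq
      clear_value x
      have habs : |Real.log s| ≤ (x + x⁻¹) / ε := by
        have h1 : |Real.log x| ≤ x + x⁻¹ := aux_abs_log hx
        rw [hlogx, abs_mul, abs_of_pos hε] at h1
        rw [le_div_iff₀ hε]
        linarith [mul_comm ε |Real.log s|]
      have h2 : (2:ℝ) ≤ x + x⁻¹ := aux_two_le hx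
      have h3 : |Real.log s| / Real.log 2 ≤ (x + x⁻¹) * (1 / (ε * Real.log 2)) := by
        calc |Real.log s| / Real.log 2 ≤ ((x + x⁻¹) / ε) / Real.log 2 := by gcongr
          _ = (x + x⁻¹) * (1 / (ε * Real.log 2)) := by rw [div_div, div_eq_mul_one_div]
      rw [hxinv, hcdef]
      calc 1 + |Real.log s| / Real.log 2 ≤ (x + x⁻¹) + (x + x⁻¹) * (1 / (ε * Real.log 2)) := by
            linarith
        _ = (1 + 1 / (ε * Real.log 2)) * (x + x⁻¹) := by ring
    have hyp : 0 ≤ y ^ (a - 1) := Real.rpow_nonneg hy0.le _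
    have hbase : 0 ≤ Real.log k * (c * (s ^ ε + s ^ (-ε))) :=
      mul_nonneg hlogk.le (mul_nonneg hc.le
        (add_nonneg (Real.rpow_nonneg hs.le _) (Real.rpow_nonneg hs.le _)))
    calc |Real.log y| ^ j * (1-y) ^ k * y ^ (a-1)
        ≤ (Real.log k * (c * (s ^ ε + s ^ (-ε)))) ^ j * Real.exp (-s) * y ^ (a-1) := by
          apply mul_le_mul_of_nonneg_right _ hyp
          apply mul_le_mul _ hexp (pow_nonneg (by linarith) k) (pow_nonneg hbase j)
          apply pow_le_pow_left₀ (abs_nonneg _)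
          calc |Real.log y| ≤ Real.log k * (1 + |Real.log s| / Real.log 2) := hlogy
            _ ≤ Real.log k * (c * (s ^ ε + s ^ (-ε))) :=
                mul_le_mul_of_nonneg_left hCs hlogk.le
      _ = Real.log k ^ j * c ^ j * (s ^ ε + s ^ (-ε)) ^ j * (Real.exp (-s) * y ^ (a-1)) := by
          rw [mul_pow, mul_pow]; ring
      _ ≤ Real.log k ^ j * c ^ j * (2 ^ j * ((s ^ ε) ^ j + (s ^ (-ε)) ^ j)) *
            (Real.exp (-s) * y ^ (a-1)) := by
          apply mul_le_mul_of_nonneg_right _ (mul_nonneg (Real.exp_nonneg _) hyp)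
          exact mul_le_mul_of_nonneg_left
            (aux_pow_add (Real.rpow_nonneg hs.le _) (Real.rpow_nonneg hs.le _) j)
            (by positivity)
      _ = g y := by
          have e1 : (s ^ ε) ^ j = (k:ℝ) ^ μ * y ^ μ := by
            rw [← Real.rpow_natCast (s ^ ε) j, ← Real.rpow_mul hs.le, ← hμdef, hsdef,
              Real.mul_rpow hk0.le hy0.le]
          have e2 : (s ^ (-ε)) ^ j = (k:ℝ) ^ (-μ) * y ^ (-μ) := by
            rw [← Real.rpow_natCast (s ^ (-ε)) j, ← Real.rpow_mul hs.le,
              show (-ε) * (j:ℝ) = -μ by rw [hμdef]; ring, hsdef,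
              Real.mul_rpow hk0.le hy0.le]
          have e3 : y ^ μ * y ^ (a-1) = y ^ (a + μ - 1) := by
            rw [← Real.rpow_add hy0]; ring_nf
          have e4 : y ^ (-μ) * y ^ (a-1) = y ^ (a - μ - 1) := by
            rw [← Real.rpow_add hy0]; ring_nf
          rw [hgdef]
          simp only []
          rw [e1, e2, ← e3, ← e4, hsdef]
          ring
  -- integral chain
  calc (∫ y in Set.Ioo (0:ℝ) 1, |Real.log y| ^ j * (1-y) ^ k * y ^ (a-1))
      ≤ ∫ y in Set.Ioo (0:ℝ) 1, g y := by
        apply integral_mono_of_nonneg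
        · filter_upwards [ae_restrict_mem measurableSet_Ioo] with y hy
          exact mul_nonneg (mul_nonneg (pow_nonneg (abs_nonneg _) _)
            (pow_nonneg (by linarith [hy.2]) _)) (Real.rpow_nonneg hy.1.le _)
        · exact hgint.mono_set Set.Ioo_subset_Ioi_self
        · filter_upwards [ae_restrict_mem measurableSet_Ioo] with y hy
          exact hpt y hy
    _ ≤ ∫ y in Set.Ioi (0:ℝ), g y := by
        apply setIntegral_mono_set hgint
        · filter_upwards [ae_restrict_mem measurableSet_Ioi] with y hy
          have h0y : (0:ℝ) < y := hy
          rw [hgdef]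
          apply mul_nonneg (mul_nonneg (pow_nonneg hlogk.le _) (by positivity))
          apply add_nonneg <;>
            exact mul_nonneg (Real.rpow_nonneg hk0.le _)
              (mul_nonneg (Real.rpow_nonneg h0y.le _) (Real.exp_nonneg _))
        · exact (Set.Ioo_subset_Ioi_self).eventuallyLE
    _ = 2 ^ j * c ^ j * (Real.Gamma (a + μ) + Real.Gamma (a - μ)) * Real.log k ^ j *
          (k:ℝ) ^ (-a) := by
        rw [hgdef]
        rw [integral_const_mul, integral_add (hint1.const_mul _) (hint2.const_mul _),
          integral_const_mul, integral_const_mul,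
          Real.integral_rpow_mul_exp_neg_mul_Ioi hp hk0,
          Real.integral_rpow_mul_exp_neg_mul_Ioi hq hk0]
        have e1 : ((1:ℝ)/(k:ℝ)) ^ (a+μ) = (k:ℝ) ^ (-(a+μ)) := by
          rw [one_div, Real.inv_rpow hk0.le, ← Real.rpow_neg hk0.le]
        have e2 : ((1:ℝ)/(k:ℝ)) ^ (a-μ) = (k:ℝ) ^ (-(a-μ)) := by
          rw [one_div, Real.inv_rpow hk0.le, ← Real.rpow_neg hk0.le]
        have e3 : (k:ℝ) ^ μ * (k:ℝ) ^ (-(a+μ)) = (k:ℝ) ^ (-a) := by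
          rw [← Real.rpow_add hk0, show μ + -(a+μ) = -a by ring]
        have e4 : (k:ℝ) ^ (-μ) * (k:ℝ) ^ (-(a-μ)) = (k:ℝ) ^ (-a) := by
          rw [← Real.rpow_add hk0, show -μ + -(a-μ) = -a by ring]
        rw [e1, e2]
        linear_combination (Real.log (k:ℝ) ^ j * (2 ^ j * c ^ j) * Real.Gamma (a + μ)) * e3 +
          (Real.log (k:ℝ) ^ j * (2 ^ j * c ^ j) * Real.Gamma (a - μ)) * e4
end

section
/- Fix C > 0 and suppose that for all n ≥ 2 and 1 ≤ i,j ≤ n, P(d(v_i,v_j) = k) ≤ (C log n)^k/√(ij) for every k ≥ 1 (where d is the graph distance on a random graph with vertices v_1,…,v_n). If w_1, w_2 are two independent uniformly chosen vertices, then for K = ⌊log n/(2C' log log n)⌋ with a suitable constant C' depending only on C, P(d(w_1,w_2) ≤ K) → 0 as n → ∞. -/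
open MeasureTheory Filter

lemma sum_inv_sqrt_le (n : ℕ) :
    ∑ i ∈ Finset.Icc 1 n, 1 / Real.sqrt i ≤ 2 * Real.sqrt n := by
  induction n with
  | zero => simp
  | succ n ih =>
    rw [show n + 1 = n + 1 from rfl, Finset.sum_Icc_succ_top (by omega)]
    have hb : (0:ℝ) < Real.sqrt (n+1) := Real.sqrt_pos.2 (by positivity)
    have ha : (0:ℝ) ≤ Real.sqrt n := Real.sqrt_nonneg n
    have h1 : Real.sqrt n ^ 2 = (n:ℝ) := Real.sq_sqrt (by positivity)
    have h2 : Real.sqrt ((n:ℝ)+1) ^ 2 = (n:ℝ)+1 := Real.sq_sqrt (by positivity)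
    have key : 1 / Real.sqrt ((n:ℝ)+1) ≤ 2 * (Real.sqrt ((n:ℝ)+1) - Real.sqrt n) := by
      rw [div_le_iff₀ hb]
      nlinarith [sq_nonneg (Real.sqrt ((n:ℝ)+1) - Real.sqrt n)]
    push_cast
    push_cast at ih
    linarith

set_option maxHeartbeats 1000000 in
/-- For each n, let μ n be the law (a probability measure on ℕ) of the graph distance
d(w₁,w₂) between two independent uniformly chosen vertices of a random graph on
v₁,…,v_n. Assume P(w₁ = w₂) gives (μ n) {0} ≤ 1/n, and that averaging the bound
P(d(v_i,v_j) = k) ≤ (C log n)^k/√(ij) yields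
(μ n) {k} ≤ (1/n²) Σ_{i,j=1}^n (C log n)^k/√(ij) for all k ≥ 1. Then for
K = ⌊log n/(2C' log log n)⌋ with a suitable constant C' > 0 depending only on C,
P(d(w₁,w₂) ≤ K) → 0 as n → ∞. -/
theorem stmt_16 (C : ℝ) (hC : 0 < C) (μ : ℕ → Measure ℕ)
    (hprob : ∀ n, IsProbabilityMeasure (μ n))
    (h0 : ∀ n : ℕ, 2 ≤ n → (μ n {0}).toReal ≤ 1/(n:ℝ))
    (hk : ∀ n : ℕ, 2 ≤ n → ∀ k : ℕ, 1 ≤ k →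
      (μ n {k}).toReal ≤ (1/(n:ℝ)^2) *
        ∑ i ∈ Finset.Icc 1 n, ∑ j ∈ Finset.Icc 1 n,
          (C * Real.log n) ^ k / Real.sqrt ((i:ℝ) * j)) :
    ∃ C' > (0:ℝ), Tendsto
      (fun n : ℕ => (μ n {m : ℕ |
        (m:ℝ) ≤ Real.log n / (2 * C' * Real.log (Real.log n))}).toReal)
      atTop (nhds 0) := by
  refine ⟨2, by norm_num, ?_⟩
  -- the dominating function
  have hg : Tendsto (fun n : ℕ => (Real.log n + 1) * 4 / Real.sqrt n) atTop (nhds 0) := by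
    have hgr : Tendsto (fun x : ℝ => (Real.log x + 1) * 4 / Real.sqrt x) atTop (nhds 0) := by
      have h1 : Tendsto (fun x : ℝ => Real.log x / x ^ (1/2:ℝ)) atTop (nhds 0) :=
        (isLittleO_log_rpow_atTop (by norm_num : (0:ℝ) < 1/2)).tendsto_div_nhds_zero
      have h2 : Tendsto (fun x : ℝ => (x ^ (1/2:ℝ))⁻¹) atTop (nhds 0) :=
        (tendsto_rpow_atTop (by norm_num : (0:ℝ) < 1/2)).inv_tendsto_atTop
      have h3 : Tendsto (fun x : ℝ =>
          4 * (Real.log x / x ^ (1/2:ℝ)) + 4 * (x ^ (1/2:ℝ))⁻¹) atTop (nhds 0) := by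
        have := ((h1.const_mul 4).add (h2.const_mul 4))
        simpa using this
      refine h3.congr' ?_
      filter_upwards [eventually_ge_atTop (1:ℝ)] with x hx
      have hxs : (0:ℝ) < x ^ (1/2:ℝ) := Real.rpow_pos_of_pos (by linarith) _
      rw [Real.sqrt_eq_rpow]
      field_simp
    exact hgr.comp tendsto_natCast_atTop_atTop
  have hlogt : Tendsto (fun n : ℕ => Real.log n) atTop atTop :=
    Real.tendsto_log_atTop.comp tendsto_natCast_atTop_atTop
  have hllt : Tendsto (fun n : ℕ => Real.log (Real.log n)) atTop atTop :=
    Real.tendsto_log_atTop.comp hlogt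
  refine tendsto_of_tendsto_of_tendsto_of_le_of_le' tendsto_const_nhds hg
    (Eventually.of_forall fun n => ENNReal.toReal_nonneg) ?_
  filter_upwards [eventually_ge_atTop 2, hlogt.eventually_ge_atTop (max (1/C) 1),
    hllt.eventually_ge_atTop (max 1 (Real.log C))] with n h2 hl hll
  set L := Real.log n with hLdef
  set LL := Real.log L with hLLdef
  have hL1 : 1 ≤ L := le_trans (le_max_right _ _) hl
  have hLL1 : 1 ≤ LL := le_trans (le_max_left _ _) hll
  have hlogC : Real.log C ≤ LL := le_trans (le_max_right _ _) hll
  have hCL1 : 1 ≤ C * L := by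
    have h1C : 1/C ≤ L := le_trans (le_max_left _ _) hl
    calc (1:ℝ) = C * (1/C) := by field_simp
    _ ≤ C * L := by nlinarith
  have hn0 : (0:ℝ) < n := by positivity
  have hsn : (0:ℝ) < Real.sqrt n := Real.sqrt_pos.2 hn0
  have hsn2 : Real.sqrt n * Real.sqrt n = (n:ℝ) := Real.mul_self_sqrt hn0.le
  set x : ℝ := L / (2 * 2 * LL) with hxdef
  have hx0 : 0 ≤ x := by positivity
  set K : ℕ := Nat.floor x with hKdef
  have hKx : (K:ℝ) ≤ x := Nat.floor_le hx0
  have hxL : x ≤ L := by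
    rw [hxdef, div_le_iff₀ (by positivity)]
    nlinarith
  -- the key bound (C*L)^K ≤ √n
  have hpow : (C * L) ^ K ≤ Real.sqrt n := by
    have hCL0 : (0:ℝ) < C * L := by linarith
    have e1 : (C * L) ^ K = Real.exp ((K:ℝ) * Real.log (C * L)) := by
      rw [Real.exp_nat_mul, Real.exp_log hCL0]
    have hlogCL : Real.log (C * L) ≤ 2 * LL := by
      rw [Real.log_mul (ne_of_gt hC) (by linarith)]
      linarith
    have hlogCL0 : 0 ≤ Real.log (C * L) := Real.log_nonneg hCL1
    have e2 : (K:ℝ) * Real.log (C * L) ≤ L / 2 := by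
      have : (K:ℝ) * Real.log (C * L) ≤ x * (2 * LL) := by
        have := mul_le_mul hKx hlogCL hlogCL0 hx0
        linarith
      have hx2 : x * (2 * LL) = L / 2 := by
        rw [hxdef]; field_simp
      linarith
    have e3 : Real.sqrt n = Real.exp (L / 2) := by
      rw [Real.sqrt_eq_rpow, Real.rpow_def_of_pos hn0]
      congr 1; rw [hLdef]; ring
    rw [e1, e3]
    exact Real.exp_le_exp.2 e2
  -- single-point bounds
  have hpoint : ∀ m ∈ Finset.range (K+1), (μ n {m}).toReal ≤ 4 / Real.sqrt n := by
    intro m hm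
    have hmK : m ≤ K := Nat.lt_succ_iff.1 (Finset.mem_range.1 hm)
    rcases Nat.eq_zero_or_pos m with rfl | hm1
    · calc (μ n {0}).toReal ≤ 1/(n:ℝ) := h0 n h2
      _ ≤ 4 / Real.sqrt n := by
          rw [div_le_div_iff₀ hn0 hsn]
          have hn2 : (2:ℝ) ≤ (n:ℝ) := by exact_mod_cast h2
          nlinarith [hsn2, hsn, sq_nonneg (Real.sqrt n - 1), hn2]
    · have hb := hk n h2 m hm1
      have hsumbd : ∑ i ∈ Finset.Icc 1 n, ∑ j ∈ Finset.Icc 1 n,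
          (C * L) ^ m / Real.sqrt ((i:ℝ) * j) ≤ (C * L) ^ m * (4 * n) := by
        have heq : ∑ i ∈ Finset.Icc 1 n, ∑ j ∈ Finset.Icc 1 n,
            (C * L) ^ m / Real.sqrt ((i:ℝ) * j)
            = (C * L) ^ m * ((∑ i ∈ Finset.Icc 1 n, 1 / Real.sqrt i) *
              (∑ j ∈ Finset.Icc 1 n, 1 / Real.sqrt j)) := by
          rw [Finset.sum_mul_sum, Finset.mul_sum]
          refine Finset.sum_congr rfl fun i _ => ?_
          rw [Finset.mul_sum]
          refine Finset.sum_congr rfl fun j _ => ?_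
          rw [Real.sqrt_mul (Nat.cast_nonneg i), div_eq_mul_inv, mul_inv,
            one_div, one_div]
        rw [heq]
        have hT := sum_inv_sqrt_le n
        have hTnn : 0 ≤ ∑ i ∈ Finset.Icc 1 n, 1 / Real.sqrt i := by positivity
        have hpownn : (0:ℝ) ≤ (C * L) ^ m := pow_nonneg (by linarith) m
        have hTT : (∑ i ∈ Finset.Icc 1 n, 1 / Real.sqrt i) *
            (∑ j ∈ Finset.Icc 1 n, 1 / Real.sqrt j) ≤ 4 * n := by
          have h4 : (2*Real.sqrt n)*(2*Real.sqrt n) = 4*(n:ℝ) := by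
            linear_combination 4 * hsn2
          exact (mul_le_mul hT hT hTnn (by positivity)).trans (le_of_eq h4)
        exact mul_le_mul_of_nonneg_left hTT hpownn
      have hmono : (C * L) ^ m ≤ (C * L) ^ K := pow_le_pow_right₀ hCL1 hmK
      calc (μ n {m}).toReal
          ≤ (1/(n:ℝ)^2) * ∑ i ∈ Finset.Icc 1 n, ∑ j ∈ Finset.Icc 1 n,
              (C * L) ^ m / Real.sqrt ((i:ℝ) * j) := hb
        _ ≤ (1/(n:ℝ)^2) * ((C * L) ^ m * (4 * n)) := by
            apply mul_le_mul_of_nonneg_left hsumbd; positivity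
        _ = 4 * (C * L) ^ m / n := by field_simp
        _ ≤ 4 * Real.sqrt n / n := by
            gcongr
            exact hmono.trans hpow
        _ = 4 / Real.sqrt n := by
            field_simp
            linear_combination hsn2
  -- put it together
  have hsub : {m : ℕ | (m:ℝ) ≤ L / (2 * 2 * LL)} ⊆ ⋃ m ∈ Finset.range (K+1), {m} := by
    intro m hm
    simp only [Set.mem_setOf_eq] at hm
    have : m ≤ K := Nat.le_floor hm
    simp only [Set.mem_iUnion, Finset.mem_range, Set.mem_singleton_iff]
    exact ⟨m, Nat.lt_succ_of_le this, rfl⟩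
  have hmeas : μ n {m : ℕ | (m:ℝ) ≤ L / (2 * 2 * LL)}
      ≤ ∑ m ∈ Finset.range (K+1), μ n {m} :=
    (measure_mono hsub).trans (measure_biUnion_finset_le _ _)
  have hne : ∀ m ∈ Finset.range (K+1), μ n {m} ≠ ⊤ := fun m _ => measure_ne_top _ _
  have hsumne : ∑ m ∈ Finset.range (K+1), μ n {m} ≠ ⊤ :=
    ENNReal.sum_ne_top.2 hne
  calc (μ n {m : ℕ | (m:ℝ) ≤ L / (2 * 2 * LL)}).toReal
      ≤ (∑ m ∈ Finset.range (K+1), μ n {m}).toReal := ENNReal.toReal_mono hsumne hmeas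
    _ = ∑ m ∈ Finset.range (K+1), (μ n {m}).toReal := ENNReal.toReal_sum hne
    _ ≤ ∑ _m ∈ Finset.range (K+1), 4 / Real.sqrt n := Finset.sum_le_sum hpoint
    _ = (K+1 : ℕ) * (4 / Real.sqrt n) := by
        rw [Finset.sum_const, Finset.card_range, nsmul_eq_mul]
    _ ≤ (L + 1) * (4 / Real.sqrt n) := by
        have : ((K:ℝ)+1) ≤ L + 1 := by
          have := hKx.trans hxL; linarith
        have h4 : 0 ≤ 4 / Real.sqrt n := by positivity
        push_cast
        nlinarith
    _ = (L + 1) * 4 / Real.sqrt n := by ring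
end
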